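/- Let K be a finite field, m ≥ 1, n ≥ m + 1, and Q₁,…,Q_n ∈ K[x₀,…,x_m] polynomials in m + 1 variables such that the subalgebra K[Q₁,…,Q_n] has transcendence degree m + 1 over K. For r ∈ ℕ let τ_r : K[x₀,…,x_m] → K[x₀,…,x_{m−1}] be the K-algebra homomorphism fixing x₀,…,x_{m−1} and sending x_m to x₀^r. Then there exists r₀ ∈ ℕ such that for all r ≥ r₀, the subalgebra K[τ_r(Q₁),…,τ_r(Q_n)] has transcendence degree m over K. -/

import Mathlib

open MvPolynomial

/-- The transcendence degree of an algebra `A` over `K`: the supremum of cardinalities of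
algebraically independent subsets (mirrors Mathlib's `Algebra.trdeg`). -/
noncomputable def algTrdeg (K A : Type*) [CommRing K] [CommRing A] [Algebra K A] : Cardinal :=
  ⨆ ι : { s : Set A // AlgebraicIndependent K ((↑) : s → A) }, Cardinal.mk ι.1


/-- The transcendence degree of a subalgebra `S` over `K`. -/
noncomputable def subTrdeg (K A : Type*) [CommRing K] [CommRing A] [Algebra K A]
    (S : Subalgebra K A) : Cardinal :=
  algTrdeg K ↥S

/-- The substitution `x_m ↦ x₀^r` from `K[x₀,…,x_m]` into `K[x₀,…,x_{m-1}]`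
(requires `m ≥ 1`). -/
noncomputable def substPow (K : Type) [Field K] (m : ℕ) (hm : 1 ≤ m) (r : ℕ) :
    MvPolynomial (Fin (m + 1)) K →ₐ[K] MvPolynomial (Fin m) K :=
  MvPolynomial.aeval fun j : Fin (m + 1) =>
    if h : (j : ℕ) < m then MvPolynomial.X (⟨j, h⟩ : Fin m)
    else (MvPolynomial.X (⟨0, hm⟩ : Fin m)) ^ r

set_option synthInstance.maxHeartbeats 400000
set_option maxHeartbeats 1000000

section Core
variable {K L : Type} [Field K] [Field L] [Algebra K L]

theorem transport_isAlgebraic {R₁ R₂ : Type*} [CommRing R₁] [CommRing R₂]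
    [Algebra R₁ L] [Algebra R₂ L] (f : R₁ →+* R₂)
    (hf : ∀ a, algebraMap R₂ L (f a) = algebraMap R₁ L a)
    (hinj : Function.Injective (algebraMap R₁ L)) {z : L}
    (h : IsAlgebraic R₁ z) : IsAlgebraic R₂ z := by
  obtain ⟨p, hp0, hpz⟩ := h
  have hfinj : Function.Injective f := fun a b hab => by
    apply hinj; rw [← hf a, ← hf b, hab]
  refine ⟨p.map f, fun h0 => hp0 ?_, ?_⟩
  · ext i
    have := congrArg (fun q => Polynomial.coeff q i) h0
    simp only [Polynomial.coeff_map, Polynomial.coeff_zero] at this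
    exact hfinj (by simpa using this)
  · have h2 : Polynomial.aeval z (p.map f) = Polynomial.eval₂ ((algebraMap R₂ L).comp f) z p := by
      rw [Polynomial.aeval_def, Polynomial.eval₂_map]
    have h3 : (algebraMap R₂ L).comp f = algebraMap R₁ L := RingHom.ext hf
    rw [h2, h3]
    exact hpz

/-- If every element of an intermediate field `F` is a quotient of elements of a
subalgebra `R ≤ F`, then algebraicity over `R` and over `F` agree. -/
theorem isAlgebraic_subalgebra_iff_field {R : Subalgebra K L} {F : IntermediateField K L}
    (hle : (R : Set L) ⊆ (F : Set L))
    (hquot : ∀ a : L, a ∈ F → ∃ p q : L, p ∈ R ∧ q ∈ R ∧ a = p / q) {z : L} :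
    IsAlgebraic ↥R z ↔ IsAlgebraic ↥F z := by
  have hRL : Function.Injective (algebraMap ↥R L) := Subtype.val_injective
  letI : Algebra (FractionRing ↥R) L := (IsFractionRing.lift (g := algebraMap ↥R L) hRL).toAlgebra
  haveI : IsScalarTower ↥R (FractionRing ↥R) L :=
    IsScalarTower.of_algebraMap_eq fun a =>
      (IsFractionRing.lift_algebraMap (K := FractionRing ↥R) hRL a).symm
  have key : IsAlgebraic ↥R z ↔ IsAlgebraic (FractionRing ↥R) z :=
    IsFractionRing.isAlgebraic_iff ↥R (FractionRing ↥R) L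
  have hφalg : ∀ a : ↥R, algebraMap (FractionRing ↥R) L (algebraMap ↥R (FractionRing ↥R) a)
      = (a : L) := fun a => IsFractionRing.lift_algebraMap (K := FractionRing ↥R) hRL a
  have hφinj : Function.Injective (algebraMap (FractionRing ↥R) L) :=
    (algebraMap (FractionRing ↥R) L).injective
  have hrange : ∀ x : FractionRing ↥R, algebraMap (FractionRing ↥R) L x ∈ F := by
    intro x
    obtain ⟨a, b, hb, hab⟩ := IsFractionRing.div_surjective (A := ↥R) x
    have : algebraMap (FractionRing ↥R) L x = (a : L) / (b : L) := by
      rw [← hab, map_div₀, hφalg, hφalg]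
    rw [this]
    exact div_mem (hle a.2) (hle b.2)
  set ψ : FractionRing ↥R →+* ↥F :=
    (algebraMap (FractionRing ↥R) L).codRestrict F.toSubring hrange with hψ
  have hψsurj : Function.Surjective ψ := by
    rintro ⟨a, ha⟩
    obtain ⟨p, q, hp, hq, rfl⟩ := hquot a ha
    refine ⟨algebraMap ↥R (FractionRing ↥R) ⟨p, hp⟩ / algebraMap ↥R (FractionRing ↥R) ⟨q, hq⟩, ?_⟩
    apply Subtype.ext
    show algebraMap (FractionRing ↥R) L _ = _
    rw [map_div₀, hφalg, hφalg]
  have hψinj : Function.Injective ψ := fun x y hxy => hφinj (congrArg Subtype.val hxy)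
  set e : FractionRing ↥R ≃+* ↥F := RingEquiv.ofBijective ψ ⟨hψinj, hψsurj⟩ with he
  have hecompat : ∀ x : FractionRing ↥R,
      ((e x : ↥F) : L) = algebraMap (FractionRing ↥R) L x := fun x => rfl
  rw [key]
  constructor
  · intro h
    exact transport_isAlgebraic e.toRingHom (fun a => hecompat a) hφinj h
  · intro h
    refine transport_isAlgebraic e.symm.toRingHom (fun a => ?_) Subtype.val_injective h
    show algebraMap (FractionRing ↥R) L (e.symm a) = (a : L)
    rw [← hecompat (e.symm a), e.apply_symm_apply]

theorem isAlgebraic_ring_adjoin_iff_field {s : Set L} {z : L} :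
    IsAlgebraic (Algebra.adjoin K s) z ↔ IsAlgebraic (IntermediateField.adjoin K s) z := by
  apply isAlgebraic_subalgebra_iff_field
  · exact IntermediateField.algebra_adjoin_le_adjoin K s
  · intro a ha
    rw [IntermediateField.mem_adjoin_iff] at ha
    obtain ⟨r, t, hrt⟩ := ha
    have hmem : ∀ u : MvPolynomial s K, (aeval (Subtype.val : s → L)) u ∈ Algebra.adjoin K s := by
      intro u
      have h1 : Algebra.adjoin K s = (aeval (Subtype.val : s → L)).range := by
        conv_lhs => rw [← Subtype.range_coe (s := s)]
        exact Algebra.adjoin_range_eq_range_aeval K _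
      rw [h1]
      exact ⟨u, rfl⟩
    exact ⟨_, _, hmem r, hmem t, hrt⟩

end Core
section Core2
variable {K L : Type} [Field K] [Field L] [Algebra K L]

theorem core_exchange {x y : L} (hytr : Transcendental K y)
    (hyx : IsAlgebraic (Algebra.adjoin K {x}) y) :
    IsAlgebraic (Algebra.adjoin K {y}) x := by
  by_cases hx : IsAlgebraic K x
  · haveI : Nontrivial ↥(Algebra.adjoin K {y}) := inferInstance
    exact hx.extendScalars (algebraMap K ↥(Algebra.adjoin K {y})).injective
  · have h1 : AlgebraicIndependent K (fun _ : Unit => x) := by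
      rw [algebraicIndependent_unique_type_iff]; exact hx
    have h4 : AlgebraicIndependent K (fun _ : Unit => y) := by
      rw [algebraicIndependent_unique_type_iff]; exact hytr
    have h2 : ¬ AlgebraicIndependent K (fun o : Option Unit => o.elim y (fun _ => x)) := by
      intro hind
      have := (h1.option_iff_transcendental y).1 hind
      rw [Set.range_const] at this
      exact this hyx
    have heqv : (fun o : Option Unit => o.elim y (fun _ => x)) =
        (fun o : Option Unit => o.elim x (fun _ => y)) ∘
          (fun o : Option Unit => o.elim (some ()) (fun _ => none)) := by
      funext o
      cases o with
      | none => rfl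
      | some u => rfl
    have h3 : ¬ AlgebraicIndependent K (fun o : Option Unit => o.elim x (fun _ => y)) := by
      intro hind
      apply h2
      rw [heqv]
      refine hind.comp _ ?_
      rintro (_ | ⟨⟩) (_ | ⟨⟩) h <;> simp_all
    have := (h4.option_iff_transcendental x).not.1 h3
    rw [Set.range_const] at this
    rwa [Transcendental, not_not] at this

theorem TB {u : Set L} {x z : L} :
    IsAlgebraic (Algebra.adjoin ↥(IntermediateField.adjoin K u) {x}) z ↔
      IsAlgebraic (Algebra.adjoin K (insert x u)) z := by
  set F := IntermediateField.adjoin K u with hF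
  have hsets : ∀ a : L, a ∈ IntermediateField.adjoin ↥F {x} ↔
      a ∈ IntermediateField.adjoin K (insert x u) := by
    intro a
    have := IntermediateField.adjoin_adjoin_left K u {x}
    rw [Set.union_singleton] at this
    rw [← this]
    rfl
  have e1 : IsAlgebraic (Algebra.adjoin ↥F {x}) z ↔
      IsAlgebraic ↥(IntermediateField.adjoin ↥F {x}) z :=
    isAlgebraic_ring_adjoin_iff_field (K := ↥F)
  have e2 : IsAlgebraic (Algebra.adjoin K (insert x u)) z ↔
      IsAlgebraic ↥(IntermediateField.adjoin K (insert x u)) z :=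
    isAlgebraic_ring_adjoin_iff_field (K := K)
  rw [e1, e2]
  let f1 : ↥(IntermediateField.adjoin ↥F {x}) →+* ↥(IntermediateField.adjoin K (insert x u)) :=
      { toFun := fun a => ⟨a.1, (hsets a.1).1 a.2⟩,
        map_one' := rfl, map_mul' := fun _ _ => rfl,
        map_zero' := rfl, map_add' := fun _ _ => rfl }
  let f2 : ↥(IntermediateField.adjoin K (insert x u)) →+* ↥(IntermediateField.adjoin ↥F {x}) :=
      { toFun := fun a => ⟨a.1, (hsets a.1).2 a.2⟩,
        map_one' := rfl, map_mul' := fun _ _ => rfl,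
        map_zero' := rfl, map_add' := fun _ _ => rfl }
  constructor
  · intro h
    exact transport_isAlgebraic (L := L) f1 (fun a => rfl) (fun a b hab => Subtype.ext hab) h
  · intro h
    exact transport_isAlgebraic (L := L) f2 (fun a => rfl) (fun a b hab => Subtype.ext hab) h

theorem exchange {u : Set L} {x y : L}
    (h1 : IsAlgebraic (Algebra.adjoin K (insert x u)) y)
    (h2 : Transcendental (Algebra.adjoin K u) y) :
    IsAlgebraic (Algebra.adjoin K (insert y u)) x := by
  set F := IntermediateField.adjoin K u with hF
  have h2' : Transcendental ↥F y := fun h => h2 (isAlgebraic_ring_adjoin_iff_field.2 h)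
  have h1' : IsAlgebraic (Algebra.adjoin ↥F {x}) y := TB.2 h1
  exact TB.1 (core_exchange h2' h1')

end Core2
section Core3
variable {K L : Type} [Field K] [Field L] [Algebra K L]

theorem peel {u : Set L} {x z : L} (hx : IsAlgebraic (Algebra.adjoin K u) x)
    (hz : IsAlgebraic (Algebra.adjoin K (insert x u)) z) :
    IsAlgebraic (Algebra.adjoin K u) z := by
  set F := IntermediateField.adjoin K u with hF
  have hx' : IsAlgebraic ↥F x := isAlgebraic_ring_adjoin_iff_field.1 hx
  have hz' : IsAlgebraic ↥(IntermediateField.adjoin ↥F {x}) z :=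
    (isAlgebraic_ring_adjoin_iff_field (K := ↥F)).1 (TB.2 hz)
  haveI := IntermediateField.adjoin.finiteDimensional (K := ↥F) hx'.isIntegral
  have hzint : IsIntegral (↥(IntermediateField.adjoin ↥F {x})) z := hz'.isIntegral
  have hint : IsIntegral ↥F z := isIntegral_trans z hzint
  exact isAlgebraic_ring_adjoin_iff_field.2 hint.isAlgebraic

theorem peel_finset (V : Finset L) {u : Set L}
    (hV : ∀ v ∈ V, IsAlgebraic (Algebra.adjoin K u) v)
    {z : L} (hz : IsAlgebraic (Algebra.adjoin K (u ∪ ↑V)) z) :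
    IsAlgebraic (Algebra.adjoin K u) z := by
  classical
  induction V using Finset.induction_on generalizing z with
  | empty =>
    rw [Finset.coe_empty, Set.union_empty] at hz
    exact hz
  | @insert v V' hvV ih =>
    have hcoe : (u ∪ ↑(insert v V') : Set L) = insert v (u ∪ ↑V') := by
      simp [Set.insert_union, Set.union_insert]
    rw [hcoe] at hz
    have hv : IsAlgebraic (Algebra.adjoin K (u ∪ ↑V')) v :=
      (hV v (Finset.mem_insert_self v V')).tower_top_of_subalgebra_le
        (Algebra.adjoin_mono Set.subset_union_left)
    have := peel hv hz
    exact ih (fun w hw => hV w (Finset.mem_insert_of_mem hw)) this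

theorem indep_transcendental {t : Set L} (ht : AlgebraicIndependent K ((↑) : t → L))
    {y : L} (hy : y ∈ t) {v : Set L} (hv : v ⊆ t \ {y}) :
    Transcendental (Algebra.adjoin K v) y := by
  classical
  have hd : AlgebraicIndependent K ((↑) : (t \ {y} : Set L) → L) := ht.mono Set.diff_subset
  have hnm : y ∉ t \ {y} := by simp
  have hins : insert y (t \ {y}) = t := by
    rw [Set.insert_diff_singleton]; exact Set.insert_eq_self.2 hy
  have hins_indep : AlgebraicIndependent K ((↑) : ↥(insert y (t \ {y})) → L) := by
    rw [hins]; exact ht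
  have hcomp : (((↑) : ↥(insert y (t \ {y})) → L) ∘ (Set.subtypeInsertEquivOption hnm).symm)
      = fun o : Option ↥(t \ {y} : Set L) => o.elim y ((↑)) := by
    funext o
    cases o <;> simp [Set.subtypeInsertEquivOption]
  have hopt : AlgebraicIndependent K (fun o : Option ↥(t \ {y} : Set L) => o.elim y ((↑))) := by
    rw [← hcomp]
    exact hins_indep.comp _ (Set.subtypeInsertEquivOption hnm).symm.injective
  have htr := (hd.option_iff_transcendental y).1 hopt
  rw [Subtype.range_coe] at htr
  exact Transcendental.of_tower_top_of_subalgebra_le (Algebra.adjoin_mono hv) htr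

variable (K) in
def SpanA (s : Set L) : Prop := ∀ z : L, IsAlgebraic (Algebra.adjoin K s) z

theorem stein [DecidableEq L] (d : ℕ) (s t : Finset L) (hspan : SpanA K (↑s : Set L))
    (ht : AlgebraicIndependent K ((↑) : (↑t : Set L) → L)) (hd : (t \ s).card ≤ d) :
    t.card ≤ s.card := by
  classical
  induction d generalizing s with
  | zero =>
    have : t \ s = ∅ := Finset.card_eq_zero.1 (Nat.le_zero.1 hd)
    exact Finset.card_le_card (fun a ha => by
      by_contra hna
      exact (Finset.eq_empty_iff_forall_notMem.1 this a) (Finset.mem_sdiff.2 ⟨ha, hna⟩))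
  | succ d ih =>
    by_cases hsub : t ⊆ s
    · exact Finset.card_le_card hsub
    obtain ⟨y, hyt, hys⟩ : ∃ y ∈ t, y ∉ s := by
      by_contra h
      push_neg at h
      exact hsub h
    set P : Finset L → Prop := fun s' => s' ⊆ s ∧ (s ∩ t) ⊆ s' ∧
      IsAlgebraic (Algebra.adjoin K (↑s' : Set L)) y with hP
    have hPs : P s := ⟨Finset.Subset.refl s, Finset.inter_subset_left, hspan y⟩
    have hS : (s.powerset.filter P).Nonempty :=
      ⟨s, Finset.mem_filter.2 ⟨Finset.mem_powerset.2 (Finset.Subset.refl s), hPs⟩⟩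
    obtain ⟨s', hs'mem, hs'min⟩ := Finset.exists_min_image (s.powerset.filter P) Finset.card hS
    rw [Finset.mem_filter, Finset.mem_powerset] at hs'mem
    obtain ⟨hs'sub, hs's, hs'int, hs'alg⟩ : s' ⊆ s ∧ s' ⊆ s ∧ (s ∩ t) ⊆ s' ∧
        IsAlgebraic (Algebra.adjoin K (↑s' : Set L)) y := ⟨hs'mem.1, hs'mem.2.1, hs'mem.2.2.1, hs'mem.2.2.2⟩
    have hy_tr_int : Transcendental (Algebra.adjoin K (↑(s ∩ t) : Set L)) y := by
      apply indep_transcendental ht hyt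
      intro z hz
      rw [Finset.coe_inter] at hz
      refine ⟨hz.2, ?_⟩
      simp only [Set.mem_singleton_iff]
      intro hzy
      subst hzy
      exact hys (by exact_mod_cast hz.1)
    obtain ⟨x, hxs', hxint⟩ : ∃ x ∈ s', x ∉ s ∩ t := by
      by_contra h
      push_neg at h
      have hsub2 : s' ⊆ s ∩ t := h
      exact hy_tr_int (hs'alg.tower_top_of_subalgebra_le
        (Algebra.adjoin_mono (by exact_mod_cast Finset.coe_subset.2 hsub2)))
    have hxs : x ∈ s := hs'sub hxs'
    have hxnt : x ∉ t := fun hxt => hxint (Finset.mem_inter.2 ⟨hxs, hxt⟩)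
    have hytr2 : Transcendental (Algebra.adjoin K (↑(s'.erase x) : Set L)) y := by
      intro halg
      have hPe : P (s'.erase x) := by
        refine ⟨(Finset.erase_subset x s').trans hs'sub, ?_, halg⟩
        intro z hz
        exact Finset.mem_erase.2 ⟨fun h => hxint (h ▸ hz), hs'int hz⟩
      have := hs'min (s'.erase x)
        (Finset.mem_filter.2 ⟨Finset.mem_powerset.2 hPe.1, hPe⟩)
      have hlt : (s'.erase x).card < s'.card := Finset.card_erase_lt_of_mem hxs'
      omega
    have hy_alg' : IsAlgebraic (Algebra.adjoin K (insert x (↑(s'.erase x) : Set L))) y := by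
      have : (↑s' : Set L) = insert x (↑(s'.erase x) : Set L) := by
        rw [← Finset.coe_insert, Finset.insert_erase hxs']
      rwa [this] at hs'alg
    have hexch := exchange hy_alg' hytr2
    have hxalg : IsAlgebraic (Algebra.adjoin K
        (insert y (↑(s.erase x) : Set L))) x := by
      refine hexch.tower_top_of_subalgebra_le (Algebra.adjoin_mono ?_)
      apply Set.insert_subset_insert
      exact_mod_cast Finset.coe_subset.2 (Finset.erase_subset_erase x hs'sub)
    set s₂ : Finset L := insert y (s.erase x) with hs₂
    have hs₂coe : (↑s₂ : Set L) = insert y (↑(s.erase x) : Set L) := by simp [hs₂]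
    have hspan₂ : SpanA K (↑s₂ : Set L) := by
      intro z
      have h2 : IsAlgebraic (Algebra.adjoin K (insert x (↑s₂ : Set L))) z := by
        refine (hspan z).tower_top_of_subalgebra_le (Algebra.adjoin_mono ?_)
        intro w hw
        rcases eq_or_ne w x with rfl | hwx
        · exact Set.mem_insert _ _
        · refine Set.mem_insert_iff.2 (Or.inr ?_)
          rw [hs₂coe]
          refine Set.mem_insert_iff.2 (Or.inr ?_)
          rw [Finset.coe_erase]
          exact ⟨hw, hwx⟩
      have hxalg' : IsAlgebraic (Algebra.adjoin K (↑s₂ : Set L)) x := by rwa [hs₂coe]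
      exact peel hxalg' h2
    have hycard : y ∉ s.erase x := fun h => hys (Finset.mem_of_mem_erase h)
    have hcard₂ : s₂.card = s.card := by
      rw [hs₂, Finset.card_insert_of_notMem hycard, Finset.card_erase_add_one hxs]
    have hdiff : t \ s₂ = (t \ s).erase y := by
      ext z
      simp only [Finset.mem_sdiff, Finset.mem_erase, hs₂, Finset.mem_insert, Finset.mem_erase]
      constructor
      · rintro ⟨hzt, hz2⟩
        push_neg at hz2
        exact ⟨hz2.1, hzt, fun hzs => (hz2.2 (fun hzx => hxnt (hzx ▸ hzt)) hzs)⟩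
      · rintro ⟨hzy, hzt, hzs⟩
        refine ⟨hzt, ?_⟩
        push_neg
        exact ⟨hzy, fun _ h => hzs h⟩
    have hdcard : (t \ s₂).card ≤ d := by
      rw [hdiff]
      have hymem : y ∈ t \ s := Finset.mem_sdiff.2 ⟨hyt, hys⟩
      have := Finset.card_erase_add_one hymem
      omega
    have := ih s₂ hspan₂ hdcard
    omega

theorem stein_set (s : Finset L) (hspan : SpanA K (↑s : Set L)) (t : Set L)
    (ht : AlgebraicIndependent K ((↑) : t → L)) : Cardinal.mk t ≤ s.card := by
  classical
  have hfin : ∀ f : Finset L, ↑f ⊆ t → f.card ≤ s.card := fun f hf =>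
    stein (f \ s).card s f hspan (ht.mono hf) le_rfl
  by_cases ht_fin : t.Finite
  · have h1 : (↑ht_fin.toFinset : Set L) = t := ht_fin.coe_toFinset
    have h2 : Cardinal.mk (↑ht_fin.toFinset : Set L) = (ht_fin.toFinset.card : Cardinal) :=
      Cardinal.mk_coe_finset
    rw [show t = (↑ht_fin.toFinset : Set L) from h1.symm, h2]
    exact_mod_cast hfin ht_fin.toFinset h1.le
  · exfalso
    obtain ⟨f, hf, hfcard⟩ := (Set.not_infinite.not_right.2 ht_fin).exists_subset_card_eq (s.card + 1)
    have := hfin f hf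
    omega

end Core3
section Poly
variable {K : Type} [Field K]

/-- Extract a finite generating set for an algebraicity witness. -/
theorem isAlgebraic_adjoin_coeffs {L : Type} [Field L] [Algebra K L]
    {S : Subalgebra K L} {z : L} (h : IsAlgebraic ↥S z) :
    ∃ V : Finset L, (↑V : Set L) ⊆ (S : Set L) ∧
      IsAlgebraic (Algebra.adjoin K (↑V : Set L)) z := by
  classical
  obtain ⟨p, hp0, hpz⟩ := h
  set q : Polynomial L := p.map (algebraMap ↥S L) with hq
  have hq0 : q ≠ 0 := fun h0 => hp0
    (Polynomial.map_injective _ (Subtype.val_injective (p := (· ∈ S)))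
      (by rw [← hq, h0, Polynomial.map_zero]))
  have hqz : q.eval z = 0 := by
    have : Polynomial.aeval z p = q.eval z := by
      rw [hq, Polynomial.aeval_def, Polynomial.eval_map]
    rw [← this, hpz]
  refine ⟨q.coeffs, ?_, ?_⟩
  · intro a ha
    obtain ⟨i, hi, rfl⟩ := Polynomial.mem_coeffs_iff.1 (Finset.mem_coe.1 ha)
    rw [hq, Polynomial.coeff_map]
    exact (p.coeff i).2
  · set T : Subring L := (Algebra.adjoin K (↑q.coeffs : Set L)).toSubring with hT
    have hsub : ↑q.coeffs ⊆ (T : Set L) := by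
      intro a ha
      rw [hT]
      exact Algebra.subset_adjoin (by exact_mod_cast ha)
    set q' : Polynomial ↥T := q.toSubring T hsub with hq'
    have hmapq : Polynomial.map T.subtype q' = q := Polynomial.map_toSubring q T hsub
    have hq'0 : q' ≠ 0 := by
      intro h0
      apply hq0
      rw [← hmapq, h0, Polynomial.map_zero]
    let g : ↥T →+* ↥(Algebra.adjoin K (↑q.coeffs : Set L)) :=
      { toFun := fun a => ⟨a.1, by rw [← Subalgebra.mem_toSubring]; exact a.2⟩,
        map_one' := rfl, map_mul' := fun _ _ => rfl,
        map_zero' := rfl, map_add' := fun _ _ => rfl }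
    have hginj : Function.Injective g := fun a b hab => Subtype.ext (congrArg Subtype.val hab)
    refine ⟨q'.map g, fun h0 => hq'0
      (Polynomial.map_injective _ hginj (by rw [h0, Polynomial.map_zero])), ?_⟩
    · have h1 : Polynomial.aeval z (q'.map g) =
          Polynomial.eval₂ ((algebraMap ↥(Algebra.adjoin K (↑q.coeffs : Set L)) L).comp g) z q' := by
        rw [Polynomial.aeval_def, Polynomial.eval₂_map]
      have h2 : (algebraMap ↥(Algebra.adjoin K (↑q.coeffs : Set L)) L).comp g = T.subtype :=
        RingHom.ext fun a => rfl
      rw [h1, h2]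
      have h3 : Polynomial.eval₂ T.subtype z q' = (Polynomial.map T.subtype q').eval z := by
        rw [Polynomial.eval_map]
      rw [h3, hmapq, hqz]

/-- Push algebraicity over a subalgebra through an injective algebra map. -/
theorem isAlgebraic_map_subalg {B' L' : Type} [CommRing B'] [CommRing L']
    [Algebra K B'] [Algebra K L'] (f : B' →ₐ[K] L') (hf : Function.Injective f)
    {S : Subalgebra K B'} {x : B'} (h : IsAlgebraic ↥S x) :
    IsAlgebraic ↥(S.map f) (f x) := by
  obtain ⟨p, hp0, hpz⟩ := h
  let g : ↥S →+* ↥(S.map f) :=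
    { toFun := fun a => ⟨f a.1, Subalgebra.mem_map.2 ⟨a.1, a.2, rfl⟩⟩,
      map_one' := by ext; simp, map_mul' := fun _ _ => by ext; simp,
      map_zero' := by ext; simp, map_add' := fun _ _ => by ext; simp }
  have hginj : Function.Injective g := fun a b hab =>
    Subtype.ext (hf (congrArg Subtype.val hab))
  refine ⟨p.map g, fun h0 => hp0
    (Polynomial.map_injective _ hginj (by rw [h0, Polynomial.map_zero])), ?_⟩
  · have h1 : Polynomial.aeval (f x) (p.map g) =
        Polynomial.eval₂ ((algebraMap ↥(S.map f) L').comp g) (f x) p := by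
      rw [Polynomial.aeval_def, Polynomial.eval₂_map]
    have h2 : (algebraMap ↥(S.map f) L').comp g = (f : B' →+* L').comp (algebraMap ↥S B') :=
      RingHom.ext fun a => rfl
    rw [h1, h2]
    have h4 := Polynomial.hom_eval₂ p (algebraMap ↥S B') (f : B' →+* L') x
    have h5 : ((f : B' →+* L') x) = f x := rfl
    rw [h5] at h4
    rw [← h4]
    have h6 : Polynomial.eval₂ (algebraMap ↥S B') x p = Polynomial.aeval x p := rfl
    rw [h6, hpz, map_zero]

end Poly
section Frac
variable {K : Type} [Field K] {k : ℕ}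

local notation "B" => MvPolynomial (Fin k) K
local notation "L" => FractionRing (MvPolynomial (Fin k) K)

noncomputable def jmap (K : Type) [Field K] (k : ℕ) :
    MvPolynomial (Fin k) K →ₐ[K] FractionRing (MvPolynomial (Fin k) K) :=
  IsScalarTower.toAlgHom K _ _

theorem jmap_injective : Function.Injective (jmap K k) :=
  IsFractionRing.injective (MvPolynomial (Fin k) K) (FractionRing (MvPolynomial (Fin k) K))

theorem span_frac : SpanA K (Set.range fun i : Fin k => jmap K k (X i)) := by
  intro z
  have hadj : Algebra.adjoin K (Set.range fun i : Fin k => jmap K k (X i)) =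
      (jmap K k).range := by
    have h1 : (Set.range fun i : Fin k => jmap K k (X i)) =
        (jmap K k) '' (Set.range (X : Fin k → B)) := by
      rw [← Set.range_comp]; rfl
    rw [h1, Algebra.adjoin_image, MvPolynomial.adjoin_range_X, Algebra.map_top]
  obtain ⟨a, b, hb, hab⟩ := IsFractionRing.div_surjective (A := B) z
  have hbne : jmap K k b ≠ 0 := by
    intro h0
    have : b = 0 := jmap_injective (by rw [h0, map_zero])
    subst this
    exact (mem_nonZeroDivisors_iff_ne_zero.1 hb) rfl
  have hmem : ∀ w : B, jmap K k w ∈ Algebra.adjoin K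
      (Set.range fun i : Fin k => jmap K k (X i)) := by
    intro w; rw [hadj]; exact ⟨w, rfl⟩
  refine ⟨Polynomial.C ⟨jmap K k b, hmem b⟩ * Polynomial.X - Polynomial.C ⟨jmap K k a, hmem a⟩,
    ?_, ?_⟩
  · intro h0
    have h2 := congrArg (fun r => (Polynomial.coeff r 1)) h0
    simp only [Polynomial.coeff_sub, Polynomial.coeff_C_mul, Polynomial.coeff_X_one,
      mul_one, Polynomial.coeff_C, Polynomial.coeff_zero] at h2
    norm_num at h2
    exact hbne (congrArg Subtype.val h2)
  · have halg : ∀ w : B, (algebraMap ↥(Algebra.adjoin K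
        (Set.range fun i : Fin k => jmap K k (X i))) L) ⟨jmap K k w, hmem w⟩ = jmap K k w :=
      fun w => rfl
    simp only [map_sub, map_mul, Polynomial.aeval_C, Polynomial.aeval_X, halg]
    rw [sub_eq_zero, ← hab]
    have hj : ∀ w : B, jmap K k w = algebraMap B L w := fun _ => rfl
    rw [hj, hj, mul_comm, div_mul_cancel₀]
    rw [← hj b]
    exact hbne

theorem jX_indep : AlgebraicIndependent K (fun i : Fin k => jmap K k (X i)) := by
  have := (MvPolynomial.algebraicIndependent_X (Fin k) K).map' (f := jmap K k) jmap_injective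
  exact this

theorem mv_upper (t : Set B) (ht : AlgebraicIndependent K ((↑) : t → B)) :
    Cardinal.mk t ≤ k := by
  classical
  have ht' : AlgebraicIndependent K ((jmap K k) ∘ ((↑) : t → B)) := ht.map' jmap_injective
  have ht'' : AlgebraicIndependent K ((↑) : (Set.range ((jmap K k) ∘ ((↑) : t → B))) → L) :=
    ht'.to_subtype_range
  have hXfin : (Set.range fun i : Fin k => jmap K k (X i)).Finite := Set.finite_range _
  have hcard : (hXfin.toFinset.card : Cardinal) ≤ (k : Cardinal) := by
    have h1 : hXfin.toFinset = Finset.univ.image fun i : Fin k => jmap K k (X i) := by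
      ext a; simp
    rw [h1]
    exact_mod_cast (Finset.card_image_le).trans (by simp)
  have hspan : SpanA K (↑hXfin.toFinset : Set L) := by
    rw [hXfin.coe_toFinset]; exact span_frac
  have h2 := stein_set hXfin.toFinset hspan _ ht''
  have hmk : Cardinal.mk (Set.range ((jmap K k) ∘ ((↑) : t → B))) = Cardinal.mk t :=
    Cardinal.mk_range_eq _ (jmap_injective.comp Subtype.val_injective)
  rw [hmk] at h2
  exact h2.trans hcard

theorem mv_not_indep (f : Fin (k + 1) → B) : ¬ AlgebraicIndependent K f := by
  intro h
  have hinj : Function.Injective f := h.injective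
  have h1 : Cardinal.mk (Set.range f) ≤ k := mv_upper _ h.coe_range
  rw [Cardinal.mk_range_eq _ hinj, Cardinal.mk_fin] at h1
  have := Nat.cast_le.1 h1
  omega

theorem lower_main (C : Subalgebra K B)
    (hX : ∀ i : Fin k, IsAlgebraic ↥C (X i : B)) :
    ∃ u : Set ↥C, AlgebraicIndependent K ((↑) : u → ↥C) ∧ (k : Cardinal) ≤ Cardinal.mk u := by
  classical
  set c : Set L := (jmap K k) '' (C : Set B) with hc
  obtain ⟨u, -, humax⟩ := exists_maximal_algebraicIndependent (∅ : Set L) c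
    (Set.empty_subset c) ((algebraicIndependent_empty_iff K L).2
      (algebraMap K L).injective)
  obtain ⟨⟨hu_indep, hu_sub⟩, hmax⟩ := humax
  have hall : ∀ w ∈ c, IsAlgebraic (Algebra.adjoin K u) w := by
    intro w hw
    by_cases hwu : w ∈ u
    · refine ⟨Polynomial.X - Polynomial.C ⟨w, Algebra.subset_adjoin hwu⟩,
        Polynomial.X_sub_C_ne_zero _, ?_⟩
      have h4 : (algebraMap ↥(Algebra.adjoin K u) L) ⟨w, Algebra.subset_adjoin hwu⟩ = w := rfl
      simp [h4]
    · by_contra htr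
      have htr' : Transcendental ↥(Algebra.adjoin K (Set.range ((↑) : u → L))) w := by
        rwa [Subtype.range_coe]
      have hopt := (hu_indep.option_iff_transcendental w).2 htr'
      have hins : AlgebraicIndependent K ((↑) : ↥(insert w u) → L) := by
        have hcomp : (fun o : Option ↥u => o.elim w ((↑))) ∘ (Set.subtypeInsertEquivOption hwu)
            = ((↑) : ↥(insert w u) → L) := by
          funext a
          rcases a with ⟨a, ha⟩
          by_cases haw : a = w
          · subst haw; simp [Set.subtypeInsertEquivOption]
          · simp [Set.subtypeInsertEquivOption, haw]
        rw [← hcomp]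
        exact hopt.comp _ (Set.subtypeInsertEquivOption hwu).injective
      have hle := hmax (y := insert w u) ⟨hins, Set.insert_subset hw hu_sub⟩
        (Set.subset_insert w u)
      exact hwu (hle (Set.mem_insert w u))
  have hXalg : ∀ i : Fin k, IsAlgebraic (Algebra.adjoin K u) (jmap K k (X i)) := by
    intro i
    have h1 : IsAlgebraic ↥(C.map (jmap K k)) (jmap K k (X i)) :=
      isAlgebraic_map_subalg (jmap K k) jmap_injective (hX i)
    obtain ⟨V, hVsub, hValg⟩ := isAlgebraic_adjoin_coeffs h1
    have hVc : (↑V : Set L) ⊆ c := by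
      intro a ha
      have := hVsub ha
      rwa [Subalgebra.coe_map] at this
    refine peel_finset V (fun v hv => hall v (hVc hv)) ?_
    exact hValg.tower_top_of_subalgebra_le (Algebra.adjoin_mono Set.subset_union_right)
  have hXfin : (Set.range fun i : Fin k => jmap K k (X i)).Finite := Set.finite_range _
  have hspanu : SpanA K u := by
    intro z
    have h0 : IsAlgebraic (Algebra.adjoin K
        (Set.range fun i : Fin k => jmap K k (X i))) z := span_frac z
    refine peel_finset hXfin.toFinset (fun v hv => ?_) ?_
    · obtain ⟨i, rfl⟩ := hXfin.mem_toFinset.1 hv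
      exact hXalg i
    · refine h0.tower_top_of_subalgebra_le (Algebra.adjoin_mono ?_)
      rw [hXfin.coe_toFinset]
      exact Set.subset_union_right
  -- u is finite
  have hu_le : Cardinal.mk u ≤ k := by
    have hspanX : SpanA K (↑hXfin.toFinset : Set L) := by
      rw [hXfin.coe_toFinset]; exact span_frac
    refine (stein_set hXfin.toFinset hspanX u hu_indep).trans ?_
    have h1 : hXfin.toFinset = Finset.univ.image fun i : Fin k => jmap K k (X i) := by
      ext a; simp
    rw [h1]
    exact_mod_cast (Finset.card_image_le).trans (by simp)
  have hufin : u.Finite :=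
    Cardinal.lt_aleph0_iff_set_finite.1 (hu_le.trans_lt (Cardinal.nat_lt_aleph0 k))
  -- k ≤ card u via stein
  have hjX_inj : Function.Injective (fun i : Fin k => jmap K k (X i)) := jX_indep.injective
  have hkle : (k : Cardinal) ≤ Cardinal.mk u := by
    set tX : Finset L := Finset.univ.image fun i : Fin k => jmap K k (X i) with htX
    have htXcoe : (↑tX : Set L) = Set.range fun i : Fin k => jmap K k (X i) := by
      rw [htX, Finset.coe_image, Finset.coe_univ, Set.image_univ]
    have htX_indep : AlgebraicIndependent K ((↑) : (↑tX : Set L) → L) := by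
      rw [htXcoe]
      exact jX_indep.coe_range
    have hspan' : SpanA K (↑hufin.toFinset : Set L) := by
      rw [hufin.coe_toFinset]; exact hspanu
    have := stein (tX \ hufin.toFinset).card hufin.toFinset tX hspan' htX_indep le_rfl
    have hcardtX : tX.card = k := by
      rw [htX, Finset.card_image_of_injective _ hjX_inj, Finset.card_univ, Fintype.card_fin]
    have hmku : Cardinal.mk u = (hufin.toFinset.card : Cardinal) :=
      (Cardinal.mk_congr (Equiv.setCongr hufin.coe_toFinset.symm)).trans Cardinal.mk_coe_finset
    rw [hmku]
    exact_mod_cast (by omega : k ≤ hufin.toFinset.card)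
  -- pull back into ↥C
  have hchoice : ∀ a : ↥u, ∃ b : ↥C, jmap K k (b : B) = (a : L) := by
    rintro ⟨a, ha⟩
    obtain ⟨b, hb, hba⟩ := hu_sub ha
    exact ⟨⟨b, hb⟩, hba⟩
  choose φ hφ using hchoice
  have hφinj : Function.Injective φ := by
    intro a b hab
    apply Subtype.ext
    rw [← hφ a, ← hφ b, hab]
  have hφ_indep : AlgebraicIndependent K φ := by
    apply AlgebraicIndependent.of_comp (C.val)
    apply AlgebraicIndependent.of_comp (jmap K k)
    have hcomp : ((jmap K k) ∘ (C.val ∘ φ)) = ((↑) : u → L) := by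
      funext a
      exact hφ a
    rw [hcomp]
    exact hu_indep
  refine ⟨Set.range φ, hφ_indep.coe_range, ?_⟩
  rw [Cardinal.mk_range_eq _ hφinj]
  exact hkle

end Frac
section Subst
variable {K : Type} [Field K]

theorem aeval_option_decomp {ι : Type*} {A : Type*} [CommRing A] [Algebra K A]
    (G : MvPolynomial (Option ι) K) (a : A) (f : ι → A) :
    aeval (fun o : Option ι => o.elim a f) G =
      Polynomial.eval₂ ((aeval f : MvPolynomial ι K →ₐ[K] A) : MvPolynomial ι K →+* A) a
        (optionEquivLeft K ι G) := by
  induction G using MvPolynomial.induction_on with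
  | C c =>
    simp [optionEquivLeft_C]
  | add p q hp hq =>
    simp [map_add, Polynomial.eval₂_add, hp, hq]
  | mul_X p o hp =>
    cases o with
    | none =>
      simp [map_mul, optionEquivLeft_X_none, Polynomial.eval₂_mul, hp]
    | some i =>
      simp [map_mul, optionEquivLeft_X_some, Polynomial.eval₂_mul, hp]

/-- The exponent map induced by `substPow` on monomials. -/
noncomputable def expMap (m : ℕ) (hm : 1 ≤ m) (r : ℕ) (α : Fin (m + 1) →₀ ℕ) : Fin m →₀ ℕ :=
  Finsupp.equivFunOnFinite.symm
    (fun j : Fin m => α j.castSucc + if j = ⟨0, hm⟩ then r * α (Fin.last m) else 0)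

theorem expMap_apply (m : ℕ) (hm : 1 ≤ m) (r : ℕ) (α : Fin (m + 1) →₀ ℕ) (j : Fin m) :
    expMap m hm r α j = α j.castSucc + if j = ⟨0, hm⟩ then r * α (Fin.last m) else 0 := rfl

theorem substPow_monomial (m : ℕ) (hm : 1 ≤ m) (r : ℕ) (α : Fin (m + 1) →₀ ℕ) (c : K) :
    substPow K m hm r (monomial α c) = monomial (expMap m hm r α) c := by
  classical
  rw [substPow, aeval_monomial, monomial_eq]
  congr 1
  rw [Finsupp.prod_fintype _ _ (fun i => pow_zero _), Finsupp.prod_fintype _ _ (fun i => pow_zero _)]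
  rw [Fin.prod_univ_castSucc]
  have hcast : ∀ j : Fin m,
      (if h : ((j.castSucc : Fin (m + 1)) : ℕ) < m then (X (⟨j.castSucc, h⟩ : Fin m) : MvPolynomial (Fin m) K)
        else (X (⟨0, hm⟩ : Fin m)) ^ r) ^ α j.castSucc = X j ^ α j.castSucc := by
    intro j
    have hj : ((j.castSucc : Fin (m + 1)) : ℕ) < m := j.2
    rw [dif_pos hj]
    congr 2
  have hlast :
      (if h : ((Fin.last m : Fin (m + 1)) : ℕ) < m then (X (⟨Fin.last m, h⟩ : Fin m) : MvPolynomial (Fin m) K)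
        else (X (⟨0, hm⟩ : Fin m)) ^ r) ^ α (Fin.last m)
        = X (⟨0, hm⟩ : Fin m) ^ (r * α (Fin.last m)) := by
    rw [dif_neg (by simp), ← pow_mul]
  calc (∏ j : Fin m, (if h : ((j.castSucc : Fin (m + 1)) : ℕ) < m then (X (⟨j.castSucc, h⟩ : Fin m) : MvPolynomial (Fin m) K)
        else (X (⟨0, hm⟩ : Fin m)) ^ r) ^ α j.castSucc) *
      (if h : ((Fin.last m : Fin (m + 1)) : ℕ) < m then (X (⟨Fin.last m, h⟩ : Fin m) : MvPolynomial (Fin m) K)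
        else (X (⟨0, hm⟩ : Fin m)) ^ r) ^ α (Fin.last m)
      = (∏ j : Fin m, (X j : MvPolynomial (Fin m) K) ^ α j.castSucc) *
        X (⟨0, hm⟩ : Fin m) ^ (r * α (Fin.last m)) := by
        rw [hlast]
        congr 1
        exact Finset.prod_congr rfl fun j _ => hcast j
    _ = ∏ j : Fin m, (X j : MvPolynomial (Fin m) K) ^ (expMap m hm r α j) := by
        have hsplit : ∀ j : Fin m, (X j : MvPolynomial (Fin m) K) ^ (expMap m hm r α j)
            = X j ^ α j.castSucc * (if j = ⟨0, hm⟩ then X j ^ (r * α (Fin.last m)) else 1) := by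
          intro j
          rw [expMap_apply, pow_add]
          split <;> simp [*]
        rw [Finset.prod_congr rfl fun j _ => hsplit j, Finset.prod_mul_distrib,
          Finset.prod_ite_eq' Finset.univ (⟨0, hm⟩ : Fin m)
            (fun j => (X j : MvPolynomial (Fin m) K) ^ (r * α (Fin.last m)))]
        simp

theorem expMap_inj_on_low {m : ℕ} {hm : 1 ≤ m} {r : ℕ} {α α' : Fin (m + 1) →₀ ℕ}
    (hα : α ⟨0, by omega⟩ < r) (hα' : α' ⟨0, by omega⟩ < r)
    (h : expMap m hm r α = expMap m hm r α') : α = α' := by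
  have hfun : ∀ j : Fin m, expMap m hm r α j = expMap m hm r α' j := fun j => by rw [h]
  have hz := hfun ⟨0, hm⟩
  rw [expMap_apply, expMap_apply, if_pos rfl, if_pos rfl] at hz
  have hcast0 : ((⟨0, hm⟩ : Fin m).castSucc : Fin (m + 1)) = ⟨0, by omega⟩ := Fin.ext rfl
  rw [hcast0] at hz
  have hr0 : 0 < r := lt_of_le_of_lt (Nat.zero_le _) hα
  have hkey : ∀ (a a' b b' : ℕ), a < r → a' < r → a + r * b = a' + r * b' → b = b' := by
    intro a a' b b' h1 h2 h3
    rcases Nat.lt_trichotomy b b' with h | h | h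
    · exfalso
      have h4 : r * b + r ≤ r * b' := by
        calc r * b + r = r * (b + 1) := by ring
          _ ≤ r * b' := Nat.mul_le_mul_left r (Nat.succ_le_of_lt h)
      omega
    · exact h
    · exfalso
      have h4 : r * b' + r ≤ r * b := by
        calc r * b' + r = r * (b' + 1) := by ring
          _ ≤ r * b := Nat.mul_le_mul_left r (Nat.succ_le_of_lt h)
      omega
  have hblast : α (Fin.last m) = α' (Fin.last m) := hkey _ _ _ _ hα hα' hz
  have h0 : α ⟨0, by omega⟩ = α' ⟨0, by omega⟩ := by
    rw [hblast] at hz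
    omega
  ext i
  refine Fin.lastCases ?_ ?_ i
  · exact hblast
  · intro j
    have := hfun j
    rw [expMap_apply, expMap_apply] at this
    by_cases hj : j = ⟨0, hm⟩
    · subst hj
      rw [hcast0]
      exact h0
    · rw [if_neg hj, if_neg hj] at this
      omega

theorem substPow_ne_zero (m : ℕ) (hm : 1 ≤ m) (r : ℕ) {f : MvPolynomial (Fin (m + 1)) K}
    (hf : f ≠ 0) (hr : f.totalDegree < r) : substPow K m hm r f ≠ 0 := by
  classical
  have hbound : ∀ α ∈ f.support, α ⟨0, by omega⟩ < r := by
    intro α hα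
    have h1 : α ⟨0, by omega⟩ ≤ α.sum fun _ e => e := by
      by_cases hmem : (⟨0, by omega⟩ : Fin (m + 1)) ∈ α.support
      · exact Finset.single_le_sum (fun i _ => Nat.zero_le _) hmem
      · rw [Finsupp.notMem_support_iff.1 hmem]
        exact Nat.zero_le _
    exact lt_of_le_of_lt (h1.trans (MvPolynomial.le_totalDegree hα)) hr
  obtain ⟨α₀, hα₀⟩ := Finset.nonempty_iff_ne_empty.2 (fun h => hf (MvPolynomial.support_eq_empty.1 h))
  have hsum : substPow K m hm r f =
      ∑ α ∈ f.support, monomial (expMap m hm r α) (coeff α f) := by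
    conv_lhs => rw [f.as_sum]
    rw [map_sum]
    exact Finset.sum_congr rfl fun α _ => substPow_monomial m hm r α (coeff α f)
  intro h0
  have hc : coeff (expMap m hm r α₀) (substPow K m hm r f) = coeff α₀ f := by
    rw [hsum, MvPolynomial.coeff_sum]
    have hsingle := Finset.sum_eq_single_of_mem (s := f.support)
      (f := fun α => coeff (expMap m hm r α₀) (monomial (expMap m hm r α) (coeff α f)))
      α₀ hα₀ (fun α hα hne => by
        show coeff (expMap m hm r α₀) (monomial (expMap m hm r α) (coeff α f)) = 0
        rw [coeff_monomial, if_neg (fun hEq =>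
          hne (expMap_inj_on_low (hbound α hα) (hbound α₀ hα₀) hEq))])
    rw [hsingle]
    show coeff (expMap m hm r α₀) (monomial (expMap m hm r α₀) (coeff α₀ f)) = coeff α₀ f
    rw [coeff_monomial, if_pos rfl]
  rw [h0] at hc
  simp only [coeff_zero] at hc
  exact (MvPolynomial.mem_support_iff.1 hα₀) hc.symm

end Subst
section Main
variable {K : Type} [Field K]

theorem subTrdeg_le {A : Type} [CommRing A] [Algebra K A] (S : Subalgebra K A) {c : Cardinal}
    (h : ∀ s : Set ↥S, AlgebraicIndependent K ((↑) : s → ↥S) → Cardinal.mk s ≤ c) :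
    subTrdeg K A S ≤ c := by
  rw [subTrdeg, algTrdeg]
  exact ciSup_le' (fun ι => h ι.1 ι.2)

theorem le_subTrdeg {A : Type} [CommRing A] [Algebra K A] (S : Subalgebra K A) {c : Cardinal}
    {s : Set ↥S} (hs : AlgebraicIndependent K ((↑) : s → ↥S)) (h : c ≤ Cardinal.mk s) :
    c ≤ subTrdeg K A S := by
  rw [subTrdeg, algTrdeg]
  have hbdd : BddAbove (Set.range fun ι : { t : Set ↥S // AlgebraicIndependent K ((↑) : t → ↥S) }
      => Cardinal.mk ι.1) := by
    refine ⟨Cardinal.mk ↥S, ?_⟩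
    rintro x ⟨ι, rfl⟩
    exact Cardinal.mk_set_le ι.1
  exact h.trans (le_ciSup hbdd ⟨s, hs⟩)

theorem stmt8_aux (K : Type) [Field K] (m n : ℕ) (hm : 1 ≤ m)
    (Q : Fin n → MvPolynomial (Fin (m + 1)) K)
    (hQ : subTrdeg K _ (Algebra.adjoin K (Set.range Q)) = ((m + 1 : ℕ) : Cardinal)) :
    ∃ r₀ : ℕ, ∀ r : ℕ, r₀ ≤ r →
      subTrdeg K _ (Algebra.adjoin K (Set.range fun i => substPow K m hm r (Q i))) =
        (m : Cardinal) := by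
  classical
  set S : Subalgebra K (MvPolynomial (Fin (m + 1)) K) := Algebra.adjoin K (Set.range Q) with hS
  -- Step 1: find m+1 independent elements of S
  have hbig : ∃ s : Set ↥S, AlgebraicIndependent K ((↑) : s → ↥S) ∧
      ((m + 1 : ℕ) : Cardinal) ≤ Cardinal.mk s := by
    by_contra hno
    push_neg at hno
    have hle : subTrdeg K _ S ≤ (m : Cardinal) := by
      refine subTrdeg_le S (fun s hs => ?_)
      have hlt : Cardinal.mk s < ((m + 1 : ℕ) : Cardinal) := hno s hs
      have hsucc : ((m + 1 : ℕ) : Cardinal) = Order.succ (m : Cardinal) := Cardinal.nat_succ m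
      rw [hsucc] at hlt
      exact Order.lt_succ_iff.1 hlt
    rw [hQ] at hle
    have := Nat.cast_le.1 hle
    omega
  obtain ⟨s, hs_indep, hs_card⟩ := hbig
  have hmk : Cardinal.mk (Fin (m + 1)) ≤ Cardinal.mk s := by rwa [Cardinal.mk_fin]
  obtain ⟨emb⟩ := (Cardinal.le_def _ _).1 hmk
  set F : Fin (m + 1) → MvPolynomial (Fin (m + 1)) K := fun i => ((emb i : ↥s) : ↥S) with hF
  have hF_indep : AlgebraicIndependent K F := by
    have h1 : AlgebraicIndependent K (((↑) : s → ↥S) ∘ emb) :=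
      hs_indep.comp emb emb.injective
    have h2 : AlgebraicIndependent K (S.val ∘ (((↑) : s → ↥S) ∘ emb)) :=
      h1.map' Subtype.val_injective
    exact h2
  have hFmem : ∀ i, F i ∈ S := fun i => ((emb i : ↥s) : ↥S).2
  have hFa : ∀ c : MvPolynomial (Fin (m + 1)) K, aeval F c = 0 → c = 0 :=
    fun c hc => hF_indep.eq_zero_of_aeval_eq_zero c hc
  -- Step 2: for each i < m get a dependence relation
  have hdep : ∀ i : Fin m, ∃ G : MvPolynomial (Option (Fin (m + 1))) K, G ≠ 0 ∧
      aeval (fun o : Option (Fin (m + 1)) => o.elim (X (Fin.castSucc i)) F) G = 0 := by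
    intro i
    have hni : ¬ AlgebraicIndependent K
        (fun o : Option (Fin (m + 1)) => o.elim (X (Fin.castSucc i)) F) := by
      intro hind
      have := hind.comp (_root_.finSuccEquiv (m + 1)) (_root_.finSuccEquiv (m + 1)).injective
      exact mv_not_indep _ this
    rw [algebraicIndependent_iff] at hni
    push_neg at hni
    obtain ⟨G, hG1, hG2⟩ := hni
    exact ⟨G, hG2, hG1⟩
  choose G hG0 hGeval using hdep
  set ghat : Fin m → Polynomial (MvPolynomial (Fin (m + 1)) K) :=
    fun i => optionEquivLeft K (Fin (m + 1)) (G i) with hghat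
  have hghat0 : ∀ i, ghat i ≠ 0 := fun i h0 => hG0 i
    ((map_eq_zero_iff (optionEquivLeft K (Fin (m + 1)))
      (optionEquivLeft K (Fin (m + 1))).injective).1 h0)
  set lead : Fin m → MvPolynomial (Fin (m + 1)) K :=
    fun i => aeval F ((ghat i).coeff (ghat i).natDegree) with hlead
  have hlead0 : ∀ i, lead i ≠ 0 := by
    intro i h0
    have := hFa _ h0
    exact (Polynomial.leadingCoeff_ne_zero.2 (hghat0 i)) this
  set r₀ : ℕ := (Finset.univ.sup fun i : Fin m => (lead i).totalDegree) + 1 with hr₀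
  refine ⟨r₀, fun r hr => ?_⟩
  set τ : MvPolynomial (Fin (m + 1)) K →ₐ[K] MvPolynomial (Fin m) K := substPow K m hm r with hτ
  set S' : Subalgebra K (MvPolynomial (Fin m) K) :=
    Algebra.adjoin K (Set.range fun i => substPow K m hm r (Q i)) with hS'
  -- membership: τ (aeval F c) ∈ S'
  have hmemS' : ∀ c : MvPolynomial (Fin (m + 1)) K, τ (aeval F c) ∈ S' := by
    intro c
    have h1 : aeval F c ∈ S := by
      have h2 : aeval F c ∈ Algebra.adjoin K (Set.range F) := by
        rw [Algebra.adjoin_range_eq_range_aeval]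
        exact ⟨c, rfl⟩
      exact Algebra.adjoin_le (Set.range_subset_iff.2 hFmem) h2
    have h3 : S.map τ ≤ S' := by
      rw [hS, AlgHom.map_adjoin]
      apply Algebra.adjoin_mono
      rintro a ⟨b, ⟨j, rfl⟩, rfl⟩
      exact ⟨j, rfl⟩
    exact h3 (Subalgebra.mem_map.2 ⟨_, h1, rfl⟩)
  set χ : MvPolynomial (Fin (m + 1)) K →ₐ[K] ↥S' :=
    (τ.comp (aeval F)).codRestrict S' (fun c => hmemS' c) with hχ
  -- each X i algebraic over S'
  have hXalg : ∀ i : Fin m, IsAlgebraic ↥S' (X i : MvPolynomial (Fin m) K) := by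
    intro i
    refine ⟨(ghat i).map χ.toRingHom, ?_, ?_⟩
    · intro h0
      have hcoeff := congrArg (fun q => Polynomial.coeff q (ghat i).natDegree) h0
      simp only [Polynomial.coeff_map, Polynomial.coeff_zero] at hcoeff
      have hval := congrArg Subtype.val hcoeff
      have hval' : τ (aeval F ((ghat i).coeff (ghat i).natDegree)) = 0 := hval
      have hrd : (lead i).totalDegree < r := by
        have h1 : (lead i).totalDegree ≤ Finset.univ.sup fun j : Fin m => (lead j).totalDegree :=
          Finset.le_sup (f := fun j : Fin m => (lead j).totalDegree) (Finset.mem_univ i)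
        omega
      exact substPow_ne_zero m hm r (hlead0 i) hrd hval'
    · -- evaluation
      have h1 : Polynomial.eval₂
          ((aeval F : MvPolynomial (Fin (m + 1)) K →ₐ[K] MvPolynomial (Fin (m + 1)) K) :
            MvPolynomial (Fin (m + 1)) K →+* MvPolynomial (Fin (m + 1)) K)
          (X (Fin.castSucc i)) (ghat i) = 0 := by
        rw [← aeval_option_decomp (K := K)]
        exact hGeval i
      have h2 := Polynomial.hom_eval₂ (ghat i)
        ((aeval F : MvPolynomial (Fin (m + 1)) K →ₐ[K] MvPolynomial (Fin (m + 1)) K) :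
          MvPolynomial (Fin (m + 1)) K →+* MvPolynomial (Fin (m + 1)) K)
        (τ : MvPolynomial (Fin (m + 1)) K →+* MvPolynomial (Fin m) K) (X (Fin.castSucc i))
      rw [h1, map_zero] at h2
      have hτX : τ (X (Fin.castSucc i) : MvPolynomial (Fin (m + 1)) K) = (X (⟨i, i.2⟩ : Fin m) : MvPolynomial (Fin m) K) := by
        rw [hτ, substPow]
        rw [aeval_X]
        rw [dif_pos (show ((Fin.castSucc i : Fin (m+1)) : ℕ) < m from i.2)]
        rfl
      rw [show ((τ : MvPolynomial (Fin (m + 1)) K →+* MvPolynomial (Fin m) K)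
        (X (Fin.castSucc i))) = τ (X (Fin.castSucc i) : MvPolynomial (Fin (m + 1)) K) from rfl,
        hτX] at h2
      have h3 : Polynomial.aeval (X (⟨i, i.2⟩ : Fin m) : MvPolynomial (Fin m) K)
          ((ghat i).map χ.toRingHom) = 0 := by
        rw [Polynomial.aeval_def, Polynomial.eval₂_map]
        have h4 : (algebraMap ↥S' (MvPolynomial (Fin m) K)).comp χ.toRingHom =
            (τ : MvPolynomial (Fin (m+1)) K →+* MvPolynomial (Fin m) K).comp
              ((aeval F : MvPolynomial (Fin (m + 1)) K →ₐ[K] MvPolynomial (Fin (m + 1)) K) :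
                MvPolynomial (Fin (m + 1)) K →+* MvPolynomial (Fin (m + 1)) K) :=
            RingHom.ext fun c => rfl
        rw [h4]
        exact h2.symm
      have h5 : (X (⟨i, i.2⟩ : Fin m) : MvPolynomial (Fin m) K) = X i := by
        congr
      rwa [h5] at h3
  -- lower bound
  obtain ⟨u, hu_indep, hu_card⟩ := lower_main (k := m) S' hXalg
  -- conclude
  apply le_antisymm
  · refine subTrdeg_le S' (fun s hs => ?_)
    have h1 : AlgebraicIndependent K (S'.val ∘ ((↑) : s → ↥S')) := hs.map' Subtype.val_injective
    have h2 := mv_upper (k := m) _ h1.to_subtype_range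
    have h3 : Cardinal.mk (Set.range (S'.val ∘ ((↑) : s → ↥S'))) = Cardinal.mk s :=
      Cardinal.mk_range_eq _ (Subtype.val_injective.comp Subtype.val_injective)
    rwa [h3] at h2
  · exact le_subTrdeg S' hu_indep hu_card

end Main

/-- Over a finite field `K`: if the subalgebra `K[Q₁,…,Qₙ]` of `K[x₀,…,x_m]` has
transcendence degree `m + 1`, then for all sufficiently large `r` the subalgebra
`K[τ_r(Q₁),…,τ_r(Qₙ)]`, obtained by substituting `x₀^r` for `x_m`, has transcendence
degree `m`. -/
theorem stmt_8 (K : Type) [Field K] [Finite K] (m n : ℕ) (hm : 1 ≤ m) (hn : m + 1 ≤ n)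
    (Q : Fin n → MvPolynomial (Fin (m + 1)) K)
    (hQ : subTrdeg K _ (Algebra.adjoin K (Set.range Q)) = ((m + 1 : ℕ) : Cardinal)) :
    ∃ r₀ : ℕ, ∀ r : ℕ, r₀ ≤ r →
      subTrdeg K _ (Algebra.adjoin K (Set.range fun i => substPow K m hm r (Q i))) =
        (m : Cardinal) :=
  stmt8_aux K m n hm Q hQ
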